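/- The average participation solution AP satisfies relative c-participation monotonicity: for all games u, v with u(∅) = v(∅) = 0 such that c(u, j) = c(v, j) for every agent j, and all agents i, k such that c(u, i) = c(u, k) and u(S ∪ {i}) − v(S ∪ {i}) ≥ u(S ∪ {k}) − v(S ∪ {k}) for every S ⊆ N \ {i, k}, it holds that AP_i(u) − AP_i(v) ≥ AP_k(u) − AP_k(v). -/

import Mathlib

open Finset
open scoped Classical

/-- A monotone game on agent set `Fin n`: `u ∅ = 0` and `u` is monotone w.r.t. inclusion. -/
def IsMonotoneGame (n : ℕ) (u : Finset (Fin n) → ℝ) : Prop :=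
  u ∅ = 0 ∧ ∀ S T : Finset (Fin n), S ⊆ T → u S ≤ u T

/-- The contribution indicator: `c(u,i) = 0` if `u (S ∪ {i}) = u S` for every `S`,
and `c(u,i) = 1` otherwise. -/
noncomputable def contrib {n : ℕ} (u : Finset (Fin n) → ℝ) (i : Fin n) : ℝ :=
  if ∀ S : Finset (Fin n), u (insert i S) = u S then 0 else 1

/-- The average participation solution
`AP_i(u) = ∑_{S ⊆ N \ {i}} w ⬝ (c(u,i) / (∑_{j ∈ S} c(u,j) + 1)) ⬝ u (S ∪ {i})`,
where `w = 1 / (2 ^ n - 1)`. -/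
noncomputable def AP {n : ℕ} (u : Finset (Fin n) → ℝ) (i : Fin n) : ℝ :=
  ∑ S ∈ (Finset.univ.erase i).powerset,
    (1 / (2 ^ n - 1 : ℝ)) * (contrib u i / ((∑ j ∈ S, contrib u j) + 1)) * u (insert i S)

/-- The average participation solution satisfies relative c-participation monotonicity. -/
theorem ap_RcParM (n : ℕ) (hn : 1 ≤ n)
    (u v : Finset (Fin n) → ℝ) (hu : u ∅ = 0) (hv : v ∅ = 0)
    (hc : ∀ j : Fin n, contrib u j = contrib v j) (i k : Fin n)
    (hik : contrib u i = contrib u k)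
    (h : ∀ S : Finset (Fin n), i ∉ S → k ∉ S →
      u (insert i S) - v (insert i S) ≥ u (insert k S) - v (insert k S)) :
    AP u i - AP v i ≥ AP u k - AP v k := by
  by_cases hik' : i = k
  · subst hik'; exact le_refl _
  have hcv : ∀ j, contrib v j = contrib u j := fun j => (hc j).symm
  -- nonnegativity facts
  have hcnn : ∀ j, (0:ℝ) ≤ contrib u j := by
    intro j; unfold contrib; split <;> norm_num
  have hw : (0:ℝ) ≤ 1 / (2 ^ n - 1 : ℝ) := by
    have : (1:ℝ) ≤ 2 ^ n := one_le_pow₀ (by norm_num)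
    have : (0:ℝ) ≤ 2 ^ n - 1 := by linarith
    positivity
  have hσ : ∀ S : Finset (Fin n), (0:ℝ) ≤ ∑ j ∈ S, contrib u j :=
    fun S => Finset.sum_nonneg fun j _ => hcnn j
  -- rewrite AP differences
  have key : ∀ x : Fin n, AP u x - AP v x =
      ∑ S ∈ (Finset.univ.erase x).powerset,
        (1 / (2 ^ n - 1 : ℝ)) * (contrib u x / ((∑ j ∈ S, contrib u j) + 1)) *
          (u (insert x S) - v (insert x S)) := by
    intro x
    unfold AP
    simp only [hcv]
    rw [← Finset.sum_sub_distrib]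
    exact Finset.sum_congr rfl fun S _ => by ring
  rw [key i, key k, ge_iff_le]
  set w : ℝ := 1 / (2 ^ n - 1 : ℝ) with hwdef
  set c : ℝ := contrib u i with hcdef
  rw [← hik]
  set D : Finset (Fin n) → ℝ := fun S => u S - v S with hD
  have hrw : ∀ x S, u (insert x S) - v (insert x S) = D (insert x S) := fun _ _ => rfl
  simp only [hrw]
  -- split both sums by membership of the other player
  rw [← Finset.sum_filter_add_sum_filter_not ((Finset.univ.erase i).powerset) (fun S => k ∈ S),
      ← Finset.sum_filter_add_sum_filter_not ((Finset.univ.erase k).powerset) (fun S => i ∈ S)]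
  have heq : ∑ S ∈ ((Finset.univ.erase k).powerset).filter (fun S => i ∈ S),
        w * (c / ((∑ j ∈ S, contrib u j) + 1)) * D (insert k S)
      = ∑ S ∈ ((Finset.univ.erase i).powerset).filter (fun S => k ∈ S),
        w * (c / ((∑ j ∈ S, contrib u j) + 1)) * D (insert i S) := by
    refine Finset.sum_bij' (fun S _ => insert k (S.erase i)) (fun T _ => insert i (T.erase k))
      ?hi ?hj ?li ?ri ?hval
    case hi =>
      intro S hS
      simp only [Finset.mem_filter, Finset.mem_powerset] at hS ⊢
      refine ⟨?_, Finset.mem_insert_self _ _⟩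
      intro x hx
      rcases Finset.mem_insert.1 hx with rfl | hx
      · exact Finset.mem_erase.2 ⟨Ne.symm hik', Finset.mem_univ _⟩
      · exact Finset.mem_erase.2 ⟨(Finset.mem_erase.1 hx).1, Finset.mem_univ _⟩
    case hj =>
      intro T hT
      simp only [Finset.mem_filter, Finset.mem_powerset] at hT ⊢
      refine ⟨?_, Finset.mem_insert_self _ _⟩
      intro x hx
      rcases Finset.mem_insert.1 hx with rfl | hx
      · exact Finset.mem_erase.2 ⟨hik', Finset.mem_univ _⟩
      · exact Finset.mem_erase.2 ⟨(Finset.mem_erase.1 hx).1, Finset.mem_univ _⟩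
    case li =>
      intro S hS
      simp only [Finset.mem_filter, Finset.mem_powerset] at hS
      obtain ⟨hS1, hS2⟩ := hS
      have hkS : k ∉ S.erase i := fun hk =>
        (Finset.mem_erase.1 (hS1 (Finset.mem_of_mem_erase hk))).1 rfl
      rw [Finset.erase_insert hkS, Finset.insert_erase hS2]
    case ri =>
      intro T hT
      simp only [Finset.mem_filter, Finset.mem_powerset] at hT
      obtain ⟨hT1, hT2⟩ := hT
      have hiT : i ∉ T.erase k := fun hi =>
        (Finset.mem_erase.1 (hT1 (Finset.mem_of_mem_erase hi))).1 rfl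
      rw [Finset.erase_insert hiT, Finset.insert_erase hT2]
    case hval =>
      intro S hS
      simp only [Finset.mem_filter, Finset.mem_powerset] at hS
      obtain ⟨hS1, hS2⟩ := hS
      have hkS : k ∉ S := fun hk => (Finset.mem_erase.1 (hS1 hk)).1 rfl
      have hkSe : k ∉ S.erase i := fun hk => hkS (Finset.mem_of_mem_erase hk)
      have hiSe : i ∉ S.erase i := Finset.notMem_erase _ _
      have hsets : insert i (insert k (S.erase i)) = insert k S := by
        ext x
        by_cases hxi : x = i
        · subst hxi; simp [hS2]
        · simp only [Finset.mem_insert, Finset.mem_erase]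
          tauto
      have hsum : ∑ j ∈ insert k (S.erase i), contrib u j = ∑ j ∈ S, contrib u j := by
        rw [Finset.sum_insert hkSe, ← hik, hcdef, ← Finset.sum_insert hiSe,
          Finset.insert_erase hS2]
      rw [hsum, hsets]
  rw [heq]
  apply add_le_add (le_refl _)
  have hfilt : ∀ x y : Fin n, ((Finset.univ.erase x).powerset).filter (fun S => y ∉ S)
      = ((Finset.univ.erase x).erase y).powerset := by
    intro x y; ext T; simp [Finset.subset_erase]
  rw [hfilt, hfilt, Finset.erase_right_comm]
  apply Finset.sum_le_sum
  intro S hS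
  simp only [Finset.mem_powerset] at hS
  have hiS : i ∉ S := fun hi => (Finset.mem_erase.1 (Finset.mem_of_mem_erase (hS hi))).1 rfl
  have hkS : k ∉ S := fun hk => (Finset.mem_erase.1 (hS hk)).1 rfl
  have hpos : (0:ℝ) ≤ w * (c / ((∑ j ∈ S, contrib u j) + 1)) := by
    apply mul_nonneg hw
    apply div_nonneg (hcnn i)
    linarith [hσ S]
  exact mul_le_mul_of_nonneg_left (h S hiS hkS) hpos
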